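/- Let G be a graph with vertex set [n] whose edges are chosen by sampling r edges uniformly at random without repetition from all (n choose 2) pairs, with r ≤ n/2. Then for any fixed integer k ≥ 3, the probability that k fixed sampled edges (in a fixed order among the r samples) form a closed walk is at most 2.01^k / n^k, and the probability that they form a walk between two fixed distinct endpoints is at most 2.01^k / n^{k+1}. -/

import Mathlib

open Finset

-- The type of possible edges of a simple graph on vertex set `Fin n`.
abbrev SimpleEdge (n : ℕ) := {e : Sym2 (Fin n) // ¬ e.IsDiag}

-- `es 0, es 1, …, es (k-1)` form a closed walk: there are vertices
-- `v 0, …, v k` with `v 0 = v k` and `es j = s(v j, v (j+1))`.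
def IsClosedWalk {n k : ℕ} (es : Fin k → Sym2 (Fin n)) : Prop :=
  ∃ v : Fin (k + 1) → Fin n, v 0 = v (Fin.last k) ∧
    ∀ j : Fin k, es j = s(v j.castSucc, v j.succ)

-- `es 0, …, es (k-1)` form a walk from `u` to `w`.
def IsWalkBetween {n k : ℕ} (u w : Fin n) (es : Fin k → Sym2 (Fin n)) : Prop :=
  ∃ v : Fin (k + 1) → Fin n, v 0 = u ∧ v (Fin.last k) = w ∧
    ∀ j : Fin k, es j = s(v j.castSucc, v j.succ)

section Aux

open Function

private lemma exists_perm_comp {E : Type*} [Fintype E] {k : ℕ} (e₀ e : Fin k ↪ E) :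
    ∃ σ : Equiv.Perm E, ∀ i, σ (e₀ i) = e i := by
  classical
  set s : Set E := Set.range e₀ with hs
  set t : Set E := Set.range e with ht
  let q : s ≃ t := (Equiv.ofInjective e₀ e₀.injective).symm.trans (Equiv.ofInjective e e.injective)
  have hcard : Fintype.card (sᶜ : Set E) = Fintype.card (tᶜ : Set E) := by
    rw [Fintype.card_compl_set, Fintype.card_compl_set]
    congr 1
    rw [← Fintype.card_congr (Equiv.ofInjective e₀ e₀.injective),
      ← Fintype.card_congr (Equiv.ofInjective e e.injective)]
  obtain ⟨c⟩ := Fintype.card_eq.mp hcard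
  obtain ⟨σ, hσ⟩ := (Equiv.Set.compl q).symm c
  refine ⟨σ, fun i => ?_⟩
  have h1 := hσ ⟨e₀ i, Set.mem_range_self i⟩
  have h2 : q ⟨e₀ i, Set.mem_range_self i⟩ = ⟨e i, Set.mem_range_self i⟩ := by
    simp only [q, Equiv.trans_apply]
    rw [Equiv.ofInjective_symm_apply]
    rfl
  rw [h1, h2]

private lemma count_factor {E : Type*} [Fintype E] {k r : ℕ} (t : Fin k ↪ Fin r)
    (Q : (Fin k ↪ E) → Prop) :
    ∃ c : ℕ,
      Nat.card {f : Fin r ↪ E // Q (t.trans f)} = Nat.card {e : Fin k ↪ E // Q e} * c ∧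
      Nat.card (Fin r ↪ E) = Nat.card (Fin k ↪ E) * c := by
  classical
  by_cases hE : Nonempty (Fin r ↪ E)
  · obtain ⟨f₀⟩ := hE
    set e₀ : Fin k ↪ E := t.trans f₀ with he₀
    set c : ℕ := Nat.card {f : Fin r ↪ E // t.trans f = e₀} with hc
    have fib : ∀ e : Fin k ↪ E, Nat.card {f : Fin r ↪ E // t.trans f = e} = c := by
      intro e
      obtain ⟨σ, hσ⟩ := exists_perm_comp e e₀
      refine Nat.card_congr ?_
      refine ⟨fun f => ⟨f.1.trans σ.toEmbedding, ?_⟩, fun f => ⟨f.1.trans σ.symm.toEmbedding, ?_⟩,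
        fun f => ?_, fun f => ?_⟩
      · ext i
        have := congrFun (congrArg (fun (g : Fin k ↪ E) => (g : Fin k → E)) f.2) i
        simp only [Embedding.trans_apply, Equiv.coe_toEmbedding] at this ⊢
        rw [this, hσ]
      · ext i
        have := congrFun (congrArg (fun (g : Fin k ↪ E) => (g : Fin k → E)) f.2) i
        simp only [Embedding.trans_apply, Equiv.coe_toEmbedding] at this ⊢
        rw [this, ← hσ, Equiv.symm_apply_apply]
      · ext i; simp
      · ext i; simp
    have key : ∀ (Q : (Fin k ↪ E) → Prop),
        Nat.card {f : Fin r ↪ E // Q (t.trans f)} = Nat.card {e : Fin k ↪ E // Q e} * c := by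
      intro Q
      have e1 : {f : Fin r ↪ E // Q (t.trans f)} ≃
          (Σ e : {e : Fin k ↪ E // Q e}, {f : Fin r ↪ E // t.trans f = e.1}) :=
        { toFun := fun f => ⟨⟨t.trans f.1, f.2⟩, f.1, rfl⟩
          invFun := fun x => ⟨x.2.1, by rw [x.2.2]; exact x.1.2⟩
          left_inv := fun f => rfl
          right_inv := fun x => by
            obtain ⟨⟨e, he⟩, f, hf⟩ := x
            dsimp only at hf
            subst hf
            rfl }
      rw [Nat.card_congr e1]
      haveI : Fintype {e : Fin k ↪ E // Q e} := Fintype.ofFinite _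
      haveI : ∀ e : {e : Fin k ↪ E // Q e}, Fintype {f : Fin r ↪ E // t.trans f = e.1} :=
        fun e => Fintype.ofFinite _
      rw [Nat.card_eq_fintype_card, Fintype.card_sigma]
      have : ∀ e : {e : Fin k ↪ E // Q e},
          Fintype.card {f : Fin r ↪ E // t.trans f = e.1} = c := by
        intro e; rw [← Nat.card_eq_fintype_card, fib]
      rw [Finset.sum_congr rfl fun e _ => this e, Finset.sum_const, smul_eq_mul,
        Finset.card_univ, Nat.card_eq_fintype_card]
    refine ⟨c, key Q, ?_⟩
    have h1 := key (fun _ => True)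
    rwa [Nat.card_congr (Equiv.subtypeUnivEquiv fun _ => trivial),
      Nat.card_congr (Equiv.subtypeUnivEquiv fun _ => trivial)] at h1
  · rw [not_nonempty_iff] at hE
    refine ⟨0, ?_, ?_⟩ <;>
      simp [Nat.card_eq_zero, hE.false, Nat.card_of_isEmpty]

variable {n k : ℕ}

private def iot (n : ℕ) (x : Fin n) : ZMod n := ((x : ℕ) : ZMod n)

private lemma iot_inj : Function.Injective (iot n) := by
  intro x y h
  simp only [iot] at h
  have h2 := congrArg ZMod.val h
  rw [ZMod.val_cast_of_lt x.2, ZMod.val_cast_of_lt y.2] at h2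
  exact Fin.ext h2

private lemma card_ne_zero' (hn : 1 ≤ n) : Nat.card {d : ZMod n // d ≠ 0} = n - 1 := by
  haveI : NeZero n := ⟨by omega⟩
  classical
  rw [Nat.card_eq_fintype_card]
  have : Fintype.card {d : ZMod n // ¬ d = 0}
      = Fintype.card (ZMod n) - Fintype.card {d : ZMod n // d = 0} :=
    Fintype.card_subtype_compl _
  rw [this, Fintype.card_subtype_eq, ZMod.card]

private def drec (v : Fin (k + 1) → Fin n) (j : Fin (k - 1)) : ZMod n :=
  iot n (v ⟨j.1 + 1, by omega⟩) - iot n (v ⟨j.1, by omega⟩)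

private lemma drec_ne_zero {v : Fin (k + 1) → Fin n} {es : Fin k → Sym2 (Fin n)}
    (hv : ∀ j : Fin k, es j = s(v j.castSucc, v j.succ))
    (hd : ∀ j, ¬ (es j).IsDiag) (j : Fin (k - 1)) : drec v j ≠ 0 := by
  have hj : (j : ℕ) < k := by omega
  have h1 := hv ⟨j.1, hj⟩
  have h2 := hd ⟨j.1, hj⟩
  rw [h1, Sym2.mk_isDiag_iff] at h2
  have hne : v ⟨j.1, by omega⟩ ≠ v ⟨j.1 + 1, by omega⟩ := by
    convert h2 using 2 <;> rfl
  exact sub_ne_zero_of_ne (fun h => hne.symm (iot_inj h))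

private lemma drec_reconstruct {v v' : Fin (k + 1) → Fin n}
    (h0 : v 0 = v' 0) (hd : drec v = drec v') :
    ∀ m (hm : m ≤ k - 1), v ⟨m, by omega⟩ = v' ⟨m, by omega⟩ := by
  intro m
  induction m with
  | zero => intro _; simpa [show (⟨0, by omega⟩ : Fin (k+1)) = 0 from rfl] using h0
  | succ m ih =>
    intro hm
    have hdj := congrFun hd ⟨m, by omega⟩
    simp only [drec] at hdj
    have hprev : iot n (v ⟨m, by omega⟩) = iot n (v' ⟨m, by omega⟩) := by
      rw [ih (by omega)]
    exact iot_inj (by linear_combination hdj + hprev)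

private lemma card_closedWalk_le (hn : 2 ≤ n) :
    Nat.card {es : Fin k → Sym2 (Fin n) // IsClosedWalk es ∧ ∀ j, ¬ (es j).IsDiag}
      ≤ n * (n - 1) ^ (k - 1) := by
  haveI : NeZero n := ⟨by omega⟩
  classical
  have hT : Nat.card (Fin n × (Fin (k-1) → {d : ZMod n // d ≠ 0})) = n * (n-1)^(k-1) := by
    rw [Nat.card_prod, Nat.card_fun, card_ne_zero' (by omega), Nat.card_eq_fintype_card,
      Nat.card_eq_fintype_card, Fintype.card_fin, Fintype.card_fin]
  rw [← hT]
  apply Nat.card_le_card_of_injective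
    (f := fun x : {es : Fin k → Sym2 (Fin n) // IsClosedWalk es ∧ ∀ j, ¬ (es j).IsDiag} =>
      ((x.2.1.choose 0,
        fun j => ⟨drec x.2.1.choose j, drec_ne_zero x.2.1.choose_spec.2 x.2.2 j⟩) :
        Fin n × (Fin (k-1) → {d : ZMod n // d ≠ 0})))
  intro x y h
  have hx := x.2.1.choose_spec
  have hy := y.2.1.choose_spec
  have h0 : x.2.1.choose 0 = y.2.1.choose 0 := congrArg Prod.fst h
  have hdrec : drec x.2.1.choose = drec y.2.1.choose := by
    funext j
    exact Subtype.ext_iff.mp (congrFun (congrArg Prod.snd h) j)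
  have hvv : ∀ i : Fin (k+1), x.2.1.choose i = y.2.1.choose i := by
    intro i
    rcases Nat.lt_or_ge i.1 k with hik | hik
    · exact drec_reconstruct h0 hdrec i.1 (by omega)
    · have hik' : i = Fin.last k := Fin.ext (by simp [Fin.last]; omega)
      rw [hik', ← hx.1, ← hy.1]
      exact h0
  apply Subtype.ext
  funext j
  rw [hx.2 j, hy.2 j, hvv _, hvv _]

private lemma card_walkBetween_le (hn : 2 ≤ n) (u w : Fin n) :
    Nat.card {es : Fin k → Sym2 (Fin n) // IsWalkBetween u w es ∧ ∀ j, ¬ (es j).IsDiag}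
      ≤ (n - 1) ^ (k - 1) := by
  haveI : NeZero n := ⟨by omega⟩
  classical
  have hT : Nat.card (Fin (k-1) → {d : ZMod n // d ≠ 0}) = (n-1)^(k-1) := by
    rw [Nat.card_fun, card_ne_zero' (by omega), Nat.card_eq_fintype_card, Fintype.card_fin]
  rw [← hT]
  apply Nat.card_le_card_of_injective
    (f := fun x : {es : Fin k → Sym2 (Fin n) // IsWalkBetween u w es ∧ ∀ j, ¬ (es j).IsDiag} =>
      ((fun j => ⟨drec x.2.1.choose j, drec_ne_zero x.2.1.choose_spec.2.2 x.2.2 j⟩) :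
        Fin (k-1) → {d : ZMod n // d ≠ 0}))
  intro x y h
  have hx := x.2.1.choose_spec
  have hy := y.2.1.choose_spec
  have h0 : x.2.1.choose 0 = y.2.1.choose 0 := by rw [hx.1, hy.1]
  have hdrec : drec x.2.1.choose = drec y.2.1.choose := by
    funext j
    exact Subtype.ext_iff.mp (congrFun h j)
  have hvv : ∀ i : Fin (k+1), x.2.1.choose i = y.2.1.choose i := by
    intro i
    rcases Nat.lt_or_ge i.1 k with hik | hik
    · exact drec_reconstruct h0 hdrec i.1 (by omega)
    · have hik' : i = Fin.last k := Fin.ext (by simp [Fin.last]; omega)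
      rw [hik', hx.2.1, hy.2.1]
  apply Subtype.ext
  funext j
  rw [hx.2.2 j, hy.2.2 j, hvv _, hvv _]

private lemma bridge {n k : ℕ} (P : (Fin k → Sym2 (Fin n)) → Prop) :
    Nat.card {e : Fin k ↪ SimpleEdge n // P (fun j => (e j).1)}
      ≤ Nat.card {es : Fin k → Sym2 (Fin n) // P es ∧ ∀ j, ¬ (es j).IsDiag} := by
  classical
  apply Nat.card_le_card_of_injective
    (f := fun e : {e : Fin k ↪ SimpleEdge n // P (fun j => (e j).1)} =>
      (⟨fun j => (e.1 j).1, e.2, fun j => (e.1 j).2⟩ :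
        {es : Fin k → Sym2 (Fin n) // P es ∧ ∀ j, ¬ (es j).IsDiag}))
  intro e e' h
  have h1 := Subtype.ext_iff.mp h
  apply Subtype.ext
  apply DFunLike.ext
  intro i
  exact Subtype.ext (congrFun h1 i)

private lemma ratio_aux {num tot a b c : ℕ} (hnum : num = a * c) (htot : tot = b * c)
    (hb : 0 < b) {target : ℝ} (htarget : 0 ≤ target) (h : (a : ℝ) ≤ target * b) :
    (num : ℝ) / tot ≤ target := by
  subst hnum htot
  rcases Nat.eq_zero_or_pos c with hc | hc
  · simp [hc]
    exact htarget
  · have hc' : (c : ℝ) ≠ 0 := by positivity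
    push_cast
    rw [mul_div_mul_right _ _ hc', div_le_iff₀ (by positivity)]
    exact h

end Aux

theorem random_edges_walk_prob (n r k : ℕ) (hn : 202 ≤ n) (hr : 2 * r ≤ n)
    (hk : 3 ≤ k) (hkr : k ≤ r) (t : Fin k ↪ Fin r) :
    ((Nat.card {f : Fin r ↪ SimpleEdge n //
          IsClosedWalk (fun j => (f (t j)).1)} : ℝ)
        / (Nat.card (Fin r ↪ SimpleEdge n) : ℝ)
      ≤ 2.01 ^ k / (n : ℝ) ^ k)
    ∧ ∀ u w : Fin n, u ≠ w →
      ((Nat.card {f : Fin r ↪ SimpleEdge n //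
            IsWalkBetween u w (fun j => (f (t j)).1)} : ℝ)
          / (Nat.card (Fin r ↪ SimpleEdge n) : ℝ)
        ≤ 2.01 ^ k / (n : ℝ) ^ (k + 1)) := by
  classical
  set N : ℕ := n.choose 2 with hN
  have hEcard : Fintype.card (SimpleEdge n) = N := by
    rw [Sym2.card_subtype_not_diag, Fintype.card_fin]
  have hN2 : 2 * N = n * (n - 1) := by
    have h2 : 2 ∣ n * (n - 1) := by
      have h3 : Even ((n - 1) * (n - 1 + 1)) := Nat.even_mul_succ_self (n - 1)
      rw [show n - 1 + 1 = n by omega, mul_comm] at h3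
      exact h3.two_dvd
    rw [hN, Nat.choose_two_right, Nat.mul_div_cancel' h2]
  have hNn : n ≤ N := by
    have := Nat.mul_le_mul_left n (show 2 ≤ n - 1 by omega)
    omega
  have hkN : k ≤ N := by omega
  obtain ⟨m, hm⟩ : ∃ m, k = m + 1 := ⟨k - 1, by omega⟩
  -- denominator count
  have hKcard : Nat.card (Fin k ↪ SimpleEdge n) = N.descFactorial k := by
    rw [Nat.card_eq_fintype_card, Fintype.card_embedding_eq, hEcard, Fintype.card_fin]
  have hKpos : 0 < N.descFactorial k := by
    rcases Nat.eq_zero_or_pos (N.descFactorial k) with h | h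
    · exact absurd (Nat.descFactorial_eq_zero_iff_lt.mp h) (by omega)
    · exact h
  have hdesc : N * (N - m) ^ m ≤ N.descFactorial k := by
    obtain ⟨M, hM⟩ : ∃ M, N = M + 1 := ⟨N - 1, by omega⟩
    calc N * (N - m) ^ m = (M + 1) * (M + 1 - m) ^ m := by rw [hM]
    _ ≤ (M + 1) * M.descFactorial m := by
        exact Nat.mul_le_mul_left _ (Nat.pow_sub_le_descFactorial M m)
    _ = N.descFactorial k := by rw [hm, hM, Nat.succ_descFactorial_succ]
  -- real facts
  have hnR : (202 : ℝ) ≤ (n : ℝ) := by exact_mod_cast hn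
  have hNR : 2 * (N : ℝ) = (n : ℝ) * ((n : ℝ) - 1) := by
    have := congrArg (fun x : ℕ => (x : ℝ)) hN2
    push_cast [Nat.cast_sub (show 1 ≤ n by omega)] at this
    linarith
  have hmR : (2 : ℝ) * ((m : ℝ) + 1) ≤ (n : ℝ) := by
    have : 2 * k ≤ n := by omega
    have := (Nat.cast_le (α := ℝ)).mpr this
    push_cast [hm] at this
    linarith
  have hNmR : ((N - m : ℕ) : ℝ) = (N : ℝ) - (m : ℝ) := by
    rw [Nat.cast_sub (by omega)]
  have F1 : (n : ℝ) * (n : ℝ) ≤ 2.01 * (N : ℝ) := by nlinarith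
  have F2 : ((n : ℝ) - 1) * (n : ℝ) ≤ 2.01 * ((N - m : ℕ) : ℝ) := by
    rw [hNmR]
    nlinarith [sq_nonneg ((n : ℝ) - 202)]
  have hdescR : (N : ℝ) * (((N - m : ℕ)) : ℝ) ^ m ≤ (N.descFactorial k : ℝ) := by
    exact_mod_cast hdesc
  constructor
  · obtain ⟨c, hnum, htot⟩ := count_factor t
      (fun e : Fin k ↪ SimpleEdge n => IsClosedWalk (fun j => (e j).1))
    have haN : Nat.card {e : Fin k ↪ SimpleEdge n // IsClosedWalk (fun j => (e j).1)}
        ≤ n * (n - 1) ^ m := by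
      rw [show m = k - 1 from by omega]
      exact le_trans (bridge _) (card_closedWalk_le (by omega))
    have ha : ((Nat.card {e : Fin k ↪ SimpleEdge n // IsClosedWalk (fun j => (e j).1)} : ℕ) : ℝ)
        ≤ (n : ℝ) * ((n : ℝ) - 1) ^ m := by
      have := (Nat.cast_le (α := ℝ)).mpr haN
      push_cast [Nat.cast_sub (show 1 ≤ n by omega)] at this
      exact this
    refine ratio_aux hnum htot (by rwa [hKcard]) (by positivity) ?_
    rw [hKcard, div_mul_eq_mul_div, le_div_iff₀ (by positivity)]
    have hnn : (0 : ℝ) ≤ ((n : ℝ) - 1) * (n : ℝ) := by nlinarith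
    calc ((Nat.card {e : Fin k ↪ SimpleEdge n // IsClosedWalk (fun j => (e j).1)} : ℕ) : ℝ)
          * (n : ℝ) ^ k
        ≤ ((n : ℝ) * ((n : ℝ) - 1) ^ m) * (n : ℝ) ^ k :=
          mul_le_mul_of_nonneg_right ha (by positivity)
      _ = ((n : ℝ) * (n : ℝ)) * ((((n : ℝ) - 1) * (n : ℝ)) ^ m) := by rw [hm, mul_pow]; ring
      _ ≤ (2.01 * (N : ℝ)) * ((2.01 * ((N - m : ℕ) : ℝ)) ^ m) :=
          mul_le_mul F1 (pow_le_pow_left₀ hnn F2 m) (pow_nonneg hnn m) (by positivity)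
      _ = 2.01 ^ k * ((N : ℝ) * ((N - m : ℕ) : ℝ) ^ m) := by rw [hm, mul_pow]; ring
      _ ≤ 2.01 ^ k * (N.descFactorial k : ℝ) :=
          mul_le_mul_of_nonneg_left hdescR (by positivity)
  · intro u w _
    obtain ⟨c, hnum, htot⟩ := count_factor t
      (fun e : Fin k ↪ SimpleEdge n => IsWalkBetween u w (fun j => (e j).1))
    have haN : Nat.card {e : Fin k ↪ SimpleEdge n // IsWalkBetween u w (fun j => (e j).1)}
        ≤ (n - 1) ^ m := by
      rw [show m = k - 1 from by omega]
      exact le_trans (bridge _) (card_walkBetween_le (by omega) u w)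
    have ha : ((Nat.card {e : Fin k ↪ SimpleEdge n //
          IsWalkBetween u w (fun j => (e j).1)} : ℕ) : ℝ)
        ≤ ((n : ℝ) - 1) ^ m := by
      have := (Nat.cast_le (α := ℝ)).mpr haN
      push_cast [Nat.cast_sub (show 1 ≤ n by omega)] at this
      exact this
    refine ratio_aux hnum htot (by rwa [hKcard]) (by positivity) ?_
    rw [hKcard, div_mul_eq_mul_div, le_div_iff₀ (by positivity)]
    have hnn : (0 : ℝ) ≤ ((n : ℝ) - 1) * (n : ℝ) := by nlinarith
    calc ((Nat.card {e : Fin k ↪ SimpleEdge n //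
            IsWalkBetween u w (fun j => (e j).1)} : ℕ) : ℝ) * (n : ℝ) ^ (k + 1)
        ≤ (((n : ℝ) - 1) ^ m) * (n : ℝ) ^ (k + 1) :=
          mul_le_mul_of_nonneg_right ha (by positivity)
      _ = ((n : ℝ) * (n : ℝ)) * ((((n : ℝ) - 1) * (n : ℝ)) ^ m) := by rw [hm, mul_pow]; ring
      _ ≤ (2.01 * (N : ℝ)) * ((2.01 * ((N - m : ℕ) : ℝ)) ^ m) :=
          mul_le_mul F1 (pow_le_pow_left₀ hnn F2 m) (pow_nonneg hnn m) (by positivity)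
      _ = 2.01 ^ k * ((N : ℝ) * ((N - m : ℕ) : ℝ) ^ m) := by rw [hm, mul_pow]; ring
      _ ≤ 2.01 ^ k * (N.descFactorial k : ℝ) :=
          mul_le_mul_of_nonneg_left hdescR (by positivity)
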